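/- arXiv:1305.5569 — 2 statements merged into one kernel-verified Lean document; each statement's English description precedes it below -/
import Mathlib

section
/- Let σ be an indecomposable permutation of length k ≥ 2. Then the open interval (σ, σ ⊕ σ) in the permutation pattern poset is disconnected; explicitly, it is the disjoint union of the set S of permutations in (σ, σ⊕σ) of the form A ⊕ ρ where A is the unique occurrence of σ and ρ nonempty, and the set T of those of the form ρ ⊕ A with A the unique occurrence of σ and ρ nonempty, and no element of S is comparable to an element of T. -/
open scoped Classical

/-- The set of all (finite) permutations, as patterns: a permutation of length `n`
together with its length. -/
abbrev PermPt := Σ n : ℕ, Equiv.Perm (Fin n)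

/-- Pattern containment order: `σ` occurs in `τ` if there is a strictly monotone
choice of positions on which `τ` is order-isomorphic to `σ`. -/
def ple (σ τ : PermPt) : Prop :=
  ∃ f : Fin σ.1 → Fin τ.1, StrictMono f ∧
    ∀ a b : Fin σ.1, σ.2 a ≤ σ.2 b ↔ τ.2 (f a) ≤ τ.2 (f b)

/-- Strict pattern containment. -/
def plt (σ τ : PermPt) : Prop := ple σ τ ∧ ¬ ple τ σ

/-- Direct sum of permutations. -/
def pds {m n : ℕ} (α : Equiv.Perm (Fin m)) (β : Equiv.Perm (Fin n)) :
    Equiv.Perm (Fin (m + n)) :=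
  finSumFinEquiv.symm.trans ((Equiv.sumCongr α β).trans finSumFinEquiv)

/-- Skew sum of permutations. -/
def pss {m n : ℕ} (α : Equiv.Perm (Fin m)) (β : Equiv.Perm (Fin n)) :
    Equiv.Perm (Fin (m + n)) :=
  finSumFinEquiv.symm.trans
    (((Equiv.sumCongr α β).trans (Equiv.sumComm (Fin m) (Fin n))).trans
      (finSumFinEquiv.trans (finCongr (Nat.add_comm n m))))

/-- Direct sum, as an operation on `PermPt`. -/
def pdsP (a b : PermPt) : PermPt := ⟨a.1 + b.1, pds a.2 b.2⟩

/-- Skew sum, as an operation on `PermPt`. -/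
def pssP (a b : PermPt) : PermPt := ⟨a.1 + b.1, pss a.2 b.2⟩

/-- The empty permutation. -/
def pempty : PermPt := ⟨0, 1⟩

/-- The permutation `1` of length one. -/
def pone : PermPt := ⟨1, 1⟩

/-- A permutation is decomposable if it is the direct sum of two nonempty
permutations, i.e. some proper nonempty initial segment of positions is mapped
to the corresponding initial segment of values. -/
def Decomp {n : ℕ} (σ : Equiv.Perm (Fin n)) : Prop :=
  ∃ m : ℕ, 0 < m ∧ m < n ∧ ∀ i : Fin n, (i : ℕ) < m → (σ i : ℕ) < m

/-- Disconnectedness of a set of permutations under pattern containment: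
it splits into two nonempty parts with no comparabilities between them. -/
def Disconn (S : Set PermPt) : Prop :=
  ∃ A B : Set PermPt, A ∪ B = S ∧ A.Nonempty ∧ B.Nonempty ∧
    ∀ x ∈ A, ∀ y ∈ B, ¬ ple x y ∧ ¬ ple y x

/-- The set `S`: permutations in the open interval `(σ, σ⊕σ)` of the form
`A ⊕ ρ` with `ρ` nonempty, where the prefix `A` is the only occurrence of `σ`. -/
def Sset (k : ℕ) (σ : Equiv.Perm (Fin k)) : Set PermPt :=
  {π | (plt ⟨k, σ⟩ π ∧ plt π ⟨k + k, pds σ σ⟩) ∧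
    ∃ m : ℕ, 0 < m ∧ ∃ ρ : Equiv.Perm (Fin m), π = ⟨k + m, pds σ ρ⟩ ∧
      ∀ f : Fin k → Fin π.1, StrictMono f →
        (∀ a b : Fin k, σ a ≤ σ b ↔ π.2 (f a) ≤ π.2 (f b)) →
        ∀ x : Fin k, (f x : ℕ) = (x : ℕ)}

/-- The set `T`: permutations in the open interval `(σ, σ⊕σ)` of the form
`ρ ⊕ A` with `ρ` nonempty, where the suffix `A` is the only occurrence of `σ`. -/
def Tset (k : ℕ) (σ : Equiv.Perm (Fin k)) : Set PermPt :=
  {π | (plt ⟨k, σ⟩ π ∧ plt π ⟨k + k, pds σ σ⟩) ∧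
    ∃ m : ℕ, 0 < m ∧ ∃ ρ : Equiv.Perm (Fin m), π = ⟨m + k, pds ρ σ⟩ ∧
      ∀ f : Fin k → Fin π.1, StrictMono f →
        (∀ a b : Fin k, σ a ≤ σ b ↔ π.2 (f a) ≤ π.2 (f b)) →
        ∀ x : Fin k, (f x : ℕ) = m + (x : ℕ)}

lemma sm_add {a b : ℕ} {f : Fin a → Fin b} (hf : StrictMono f) (x y : Fin a)
    (h : (x:ℕ) ≤ y) : (f x : ℕ) + ((y:ℕ) - x) ≤ f y := by
  obtain ⟨d, hd⟩ : ∃ d, (y:ℕ) = x + d := ⟨y - x, by omega⟩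
  induction d generalizing y with
  | zero =>
      have : y = x := Fin.ext (by omega)
      subst this; omega
  | succ d ih =>
      have hy' : (x:ℕ) + d < a := by have := y.isLt; omega
      have h1 := ih ⟨x + d, hy'⟩ (by simp) rfl
      have h2 : f ⟨x + d, hy'⟩ < f y := hf (by simp [Fin.lt_def]; omega)
      rw [Fin.lt_def] at h2
      simp only [Fin.val_mk] at *
      omega

lemma sm_ge {a b : ℕ} {f : Fin a → Fin b} (hf : StrictMono f) (x : Fin a) :
    (x:ℕ) ≤ f x := by
  have h0 : 0 < a := lt_of_le_of_lt (Nat.zero_le _) x.isLt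
  have := sm_add hf ⟨0, h0⟩ x (by simp)
  simp only [Fin.val_mk] at this
  omega

lemma sm_id {a : ℕ} {f : Fin a → Fin a} (hf : StrictMono f) (x : Fin a) :
    (f x : ℕ) = x := by
  have h0 : 0 < a := lt_of_le_of_lt (Nat.zero_le _) x.isLt
  have h1 := sm_ge hf x
  have h2 := sm_add hf x ⟨a-1, by omega⟩ (by simp; omega)
  have h3 := (f ⟨a-1, by omega⟩).isLt
  have h4 := x.isLt
  simp only [Fin.val_mk] at *
  omega

lemma pattern_rigid {k : ℕ} (σ : Equiv.Perm (Fin k)) (τ : Fin k → Fin k)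
    (hinj : Function.Injective τ) (h : ∀ a b, σ a ≤ σ b ↔ τ a ≤ τ b) :
    ∀ x, (τ x : ℕ) = σ x := by
  have hmono : Monotone (fun u => τ (σ.symm u)) := by
    intro u v huv
    exact (h _ _).mp (by simpa using huv)
  have hsm : StrictMono (fun u => τ (σ.symm u)) :=
    hmono.strictMono_of_injective (hinj.comp σ.symm.injective)
  intro x
  have := sm_id hsm (σ x)
  simpa using this

lemma sep_lo {n : ℕ} (π : Equiv.Perm (Fin n)) (c : ℕ) (hc : c < n)
    (h : ∀ x y : Fin n, (x:ℕ) < c → c ≤ (y:ℕ) → π x < π y) :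
    ∀ x : Fin n, (x:ℕ) < c → (π x : ℕ) < c := by
  intro x hx
  by_contra hge
  push_neg at hge
  have hsub : (Finset.Ici (⟨c, hc⟩ : Fin n)).image π ⊆ Finset.Ioi (π x) := by
    intro v hv
    simp only [Finset.mem_image, Finset.mem_Ici] at hv
    obtain ⟨y, hy, rfl⟩ := hv
    exact Finset.mem_Ioi.mpr (h x y hx (by exact_mod_cast hy))
  have hcard := Finset.card_le_card hsub
  rw [Finset.card_image_of_injective _ π.injective, Fin.card_Ici, Fin.card_Ioi] at hcard
  have := (π x).isLt
  simp at hcard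
  omega

lemma sep_hi {n : ℕ} (π : Equiv.Perm (Fin n)) (c : ℕ) (hc : c < n)
    (h : ∀ x y : Fin n, (x:ℕ) < c → c ≤ (y:ℕ) → π x < π y) :
    ∀ y : Fin n, c ≤ (y:ℕ) → c ≤ (π y : ℕ) := by
  intro y hy
  by_contra hlt
  push_neg at hlt
  have hsub : (Finset.Iio (⟨c, hc⟩ : Fin n)).image π ⊆ Finset.Iio (π y) := by
    intro v hv
    simp only [Finset.mem_image, Finset.mem_Iio] at hv
    obtain ⟨x, hx, rfl⟩ := hv
    exact Finset.mem_Iio.mpr (h x y (by exact_mod_cast hx) hy)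
  have hcard := Finset.card_le_card hsub
  rw [Finset.card_image_of_injective _ π.injective, Fin.card_Iio, Fin.card_Iio] at hcard
  simp only [Fin.val_mk] at hcard
  omega

lemma pds_val_lt {m n : ℕ} (α : Equiv.Perm (Fin m)) (β : Equiv.Perm (Fin n))
    (i : Fin (m+n)) (h : (i:ℕ) < m) : ((pds α β) i : ℕ) = α ⟨i, h⟩ := by
  have h1 : finSumFinEquiv.symm i = Sum.inl ⟨i, h⟩ := by
    rw [Equiv.symm_apply_eq]
    exact Fin.ext (by simp)
  simp [pds, h1]

lemma pds_val_ge {m n : ℕ} (α : Equiv.Perm (Fin m)) (β : Equiv.Perm (Fin n))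
    (i : Fin (m+n)) (h : m ≤ (i:ℕ)) :
    ((pds α β) i : ℕ) = m + β ⟨(i:ℕ) - m, by have := i.isLt; omega⟩ := by
  have h1 : finSumFinEquiv.symm i = Sum.inr ⟨(i:ℕ) - m, by have := i.isLt; omega⟩ := by
    rw [Equiv.symm_apply_eq]
    exact Fin.ext (by simp; omega)
  simp [pds, h1]
lemma split_occurrence {k p q : ℕ} (σ : Equiv.Perm (Fin k)) (hσ : ¬ Decomp σ)
    (α : Equiv.Perm (Fin p)) (β : Equiv.Perm (Fin q))
    (f : Fin k → Fin (p+q)) (hf : StrictMono f)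
    (hpat : ∀ a b : Fin k, σ a ≤ σ b ↔ (pds α β) (f a) ≤ (pds α β) (f b)) :
    (∀ x, (f x : ℕ) < p) ∨ (∀ x, p ≤ (f x : ℕ)) := by
  by_contra hcon
  push_neg at hcon
  obtain ⟨⟨x0, hx0⟩, ⟨y0, hy0⟩⟩ := hcon
  have hs : (Finset.univ.filter (fun x : Fin k => p ≤ (f x:ℕ))).Nonempty :=
    ⟨x0, by simp [hx0]⟩
  obtain ⟨j, hjmem', hjmin⟩ : ∃ j ∈ Finset.univ.filter (fun x : Fin k => p ≤ (f x:ℕ)),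
      ∀ i ∈ Finset.univ.filter (fun x : Fin k => p ≤ (f x:ℕ)), j ≤ i :=
    ⟨_, Finset.min'_mem _ hs, fun i hi => Finset.min'_le _ i hi⟩
  have hjmem : p ≤ (f j : ℕ) := (Finset.mem_filter.mp hjmem').2
  have hlow : ∀ i : Fin k, (i:ℕ) < (j:ℕ) → (f i : ℕ) < p := by
    intro i hi
    by_contra hge; push_neg at hge
    have : j ≤ i := hjmin i (Finset.mem_filter.mpr ⟨Finset.mem_univ _, hge⟩)
    rw [Fin.le_def] at this; omega
  have hhigh : ∀ y : Fin k, (j:ℕ) ≤ (y:ℕ) → p ≤ (f y : ℕ) := by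
    intro y hy
    have : f j ≤ f y := hf.monotone (by rwa [Fin.le_def])
    rw [Fin.le_def] at this; omega
  have hj0 : 0 < (j:ℕ) := by
    rcases Nat.eq_zero_or_pos (j:ℕ) with h0 | h
    · exact absurd (hhigh y0 (by omega)) (by omega)
    · exact h
  have hsep : ∀ x y : Fin k, (x:ℕ) < (j:ℕ) → (j:ℕ) ≤ (y:ℕ) → σ x < σ y := by
    intro x y hx hy
    have h1 : ((pds α β) (f x) : ℕ) < p := by
      rw [pds_val_lt α β _ (hlow x hx)]; exact (α _).isLt
    have h2 : p ≤ ((pds α β) (f y) : ℕ) := by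
      rw [pds_val_ge α β _ (hhigh y hy)]; omega
    have hle : σ x ≤ σ y := (hpat x y).mpr (by rw [Fin.le_def]; omega)
    have hne : ¬ σ y ≤ σ x := fun hc => by
      have := (hpat y x).mp hc; rw [Fin.le_def] at this; omega
    exact lt_of_le_not_ge hle hne
  exact hσ ⟨(j:ℕ), hj0, j.isLt, sep_lo σ (j:ℕ) j.isLt hsep⟩

lemma uniq_pre {k m : ℕ} (hm : m < k) (σ : Equiv.Perm (Fin k)) (hσ : ¬ Decomp σ)
    (ρ : Equiv.Perm (Fin m)) (f : Fin k → Fin (k+m)) (hf : StrictMono f)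
    (hpat : ∀ a b : Fin k, σ a ≤ σ b ↔ (pds σ ρ) (f a) ≤ (pds σ ρ) (f b)) :
    ∀ x : Fin k, (f x : ℕ) = x := by
  rcases split_occurrence σ hσ σ ρ f hf hpat with h | h
  · intro x
    have hsm : StrictMono (fun x : Fin k => (⟨(f x : ℕ), h x⟩ : Fin k)) := by
      intro a b hab
      have := hf hab
      rw [Fin.lt_def] at *
      simpa using this
    have := sm_id hsm x
    simpa using this
  · exfalso
    have hk0 : 0 < k := by omega
    have h1 := sm_add hf ⟨0, hk0⟩ ⟨k-1, by omega⟩ (by simp)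
    have h2 := h ⟨0, hk0⟩
    have h3 := (f ⟨k-1, by omega⟩).isLt
    simp only [Fin.val_mk] at *
    omega

lemma uniq_suf {k m : ℕ} (hm : m < k) (σ : Equiv.Perm (Fin k)) (hσ : ¬ Decomp σ)
    (ρ : Equiv.Perm (Fin m)) (f : Fin k → Fin (m+k)) (hf : StrictMono f)
    (hpat : ∀ a b : Fin k, σ a ≤ σ b ↔ (pds ρ σ) (f a) ≤ (pds ρ σ) (f b)) :
    ∀ x : Fin k, (f x : ℕ) = m + x := by
  rcases split_occurrence σ hσ ρ σ f hf hpat with h | h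
  · exfalso
    have hk0 : 0 < k := by omega
    have h1 := sm_add hf ⟨0, hk0⟩ ⟨k-1, by omega⟩ (by simp)
    have h2 := h ⟨k-1, by omega⟩
    simp only [Fin.val_mk] at *
    omega
  · intro x
    have hsm : StrictMono (fun x : Fin k =>
        (⟨(f x : ℕ) - m, by have h5 := (f x).isLt; have h6 := h x; omega⟩ : Fin k)) := by
      intro a b hab
      have h7 := hf hab
      have h8 := h a
      rw [Fin.lt_def] at *
      simp only [Fin.val_mk] at *
      omega
    have h9 := sm_id hsm x
    have h10 := h x
    simp only [Fin.val_mk] at h9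
    omega

lemma ple_len {s t : PermPt} (h : ple s t) : s.1 ≤ t.1 := by
  obtain ⟨f, hf, -⟩ := h
  rcases Nat.eq_zero_or_pos s.1 with h0 | h0
  · omega
  · have h1 := sm_ge hf ⟨s.1 - 1, by omega⟩
    have h2 := (f ⟨s.1 - 1, by omega⟩).isLt
    simp only [Fin.val_mk] at h1
    omega

lemma ple_pds_left {k m : ℕ} (σ : Equiv.Perm (Fin k)) (ρ : Equiv.Perm (Fin m)) :
    ple ⟨k, σ⟩ ⟨k + m, pds σ ρ⟩ := by
  have hlt : ∀ c : Fin k, (c:ℕ) < k + m := fun c => by have : (c:ℕ) < k := c.isLt; omega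
  have ha : ∀ c : Fin k, ((pds σ ρ) ⟨(c:ℕ), hlt c⟩ : ℕ) = σ c := by
    intro c
    rw [pds_val_lt σ ρ _ (show ((⟨(c:ℕ), hlt c⟩ : Fin (k+m)):ℕ) < k from c.isLt)]
  refine ⟨fun x => ⟨(x:ℕ), hlt x⟩, ?_, ?_⟩
  · intro a b hab
    exact hab
  · intro a b
    show σ a ≤ σ b ↔ (pds σ ρ) ⟨(a:ℕ), hlt a⟩ ≤ (pds σ ρ) ⟨(b:ℕ), hlt b⟩
    rw [Fin.le_def, Fin.le_def, ha, ha]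

lemma ple_pds_right {k m : ℕ} (σ : Equiv.Perm (Fin k)) (ρ : Equiv.Perm (Fin m)) :
    ple ⟨k, σ⟩ ⟨m + k, pds ρ σ⟩ := by
  have hlt : ∀ c : Fin k, m + (c:ℕ) < m + k := fun c => by have : (c:ℕ) < k := c.isLt; omega
  have ha : ∀ c : Fin k, ((pds ρ σ) ⟨m + (c:ℕ), hlt c⟩ : ℕ) = m + σ c := by
    intro c
    rw [pds_val_ge ρ σ _ (show m ≤ ((⟨m + (c:ℕ), hlt c⟩ : Fin (m+k)):ℕ) by simp)]
    exact congrArg (fun z => m + ((σ z : Fin k) : ℕ)) (Fin.ext (by simp))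
  refine ⟨fun x => ⟨m + (x:ℕ), hlt x⟩, ?_, ?_⟩
  · intro a b hab
    rw [Fin.lt_def] at hab ⊢
    simp only [Fin.val_mk]
    omega
  · intro a b
    show σ a ≤ σ b ↔ (pds ρ σ) ⟨m + (a:ℕ), hlt a⟩ ≤ (pds ρ σ) ⟨m + (b:ℕ), hlt b⟩
    rw [Fin.le_def, Fin.le_def, ha, ha]
    omega
lemma pds_castAdd {m n : ℕ} (α : Equiv.Perm (Fin m)) (β : Equiv.Perm (Fin n)) (a : Fin m) :
    (pds α β) (Fin.castAdd n a) = Fin.castAdd n (α a) := by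
  simp [pds]

lemma pds_natAdd {m n : ℕ} (α : Equiv.Perm (Fin m)) (β : Equiv.Perm (Fin n)) (b : Fin n) :
    (pds α β) (Fin.natAdd m b) = Fin.natAdd m (β b) := by
  simp [pds]

lemma ple_s1_ss {k : ℕ} (hk : 2 ≤ k) (σ : Equiv.Perm (Fin k)) :
    ple ⟨k + 1, pds σ (1 : Equiv.Perm (Fin 1))⟩ ⟨k + k, pds σ σ⟩ := by
  have hk1 : k - 1 < k := by omega
  have htσ : σ (σ.symm ⟨k-1, hk1⟩) = ⟨k-1, hk1⟩ := σ.apply_symm_apply _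
  have htlt : ((σ.symm ⟨k-1, hk1⟩ : Fin k) : ℕ) < k := (σ.symm _).isLt
  refine ⟨fun i =>
    if h : (i:ℕ) < k then (⟨(i:ℕ), by omega⟩ : Fin (k+k))
    else (⟨k + ((σ.symm ⟨k-1, hk1⟩ : Fin k) : ℕ), by omega⟩ : Fin (k+k)),
    ?_, ?_⟩
  · intro a b hab
    have ha1 : (a:ℕ) < k + 1 := a.isLt
    have hb1 : (b:ℕ) < k + 1 := b.isLt
    have hab' : (a:ℕ) < (b:ℕ) := hab
    rcases Nat.lt_or_ge (a:ℕ) k with ha | ha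
    · rcases Nat.lt_or_ge (b:ℕ) k with hb | hb
      · show (if h : (a:ℕ) < k then (⟨(a:ℕ), _⟩ : Fin (k+k)) else ⟨k + _, _⟩) <
            (if h : (b:ℕ) < k then (⟨(b:ℕ), _⟩ : Fin (k+k)) else ⟨k + _, _⟩)
        rw [dif_pos ha, dif_pos hb]
        exact hab'
      · show (if h : (a:ℕ) < k then (⟨(a:ℕ), _⟩ : Fin (k+k)) else ⟨k + _, _⟩) <
            (if h : (b:ℕ) < k then (⟨(b:ℕ), _⟩ : Fin (k+k)) else ⟨k + _, _⟩)
        rw [dif_pos ha, dif_neg (by omega)]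
        show (a:ℕ) < k + _
        omega
    · omega
  · intro a b
    have ha1 : (a:ℕ) < k + 1 := a.isLt
    have hb1 : (b:ℕ) < k + 1 := b.isLt
    have hv : ∀ (c : Fin (k+1)) (h : (c:ℕ) < k),
        ((pds σ (1:Equiv.Perm (Fin 1))) c : ℕ) = σ ⟨(c:ℕ), h⟩ := by
      intro c h
      rw [pds_val_lt _ _ _ h]
    have hv' : ∀ (c : Fin (k+1)), ¬((c:ℕ) < k) →
        ((pds σ (1:Equiv.Perm (Fin 1))) c : ℕ) = k := by
      intro c h
      have hck : c = Fin.natAdd k (⟨0, by omega⟩ : Fin 1) :=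
        Fin.ext (by have := c.isLt; simp; omega)
      rw [hck, pds_natAdd]
      have h2 := ((1 : Equiv.Perm (Fin 1)) ⟨0, by omega⟩).isLt
      show k + _ = k
      omega
    dsimp only
    rw [Fin.le_def, Fin.le_def]
    rcases Nat.lt_or_ge (a:ℕ) k with ha | ha <;> rcases Nat.lt_or_ge (b:ℕ) k with hb | hb
    · rw [dif_pos ha, dif_pos hb, hv a ha, hv b hb]
      have hFa : (⟨(a:ℕ), by omega⟩ : Fin (k+k)) = Fin.castAdd k ⟨(a:ℕ), ha⟩ := Fin.ext rfl
      have hFb : (⟨(b:ℕ), by omega⟩ : Fin (k+k)) = Fin.castAdd k ⟨(b:ℕ), hb⟩ := Fin.ext rfl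
      rw [hFa, hFb, pds_castAdd, pds_castAdd]
      rfl
    · rw [dif_pos ha, dif_neg (by omega), hv a ha, hv' b (by omega)]
      have hFa : (⟨(a:ℕ), by omega⟩ : Fin (k+k)) = Fin.castAdd k ⟨(a:ℕ), ha⟩ := Fin.ext rfl
      have hFb : (⟨k + ((σ.symm ⟨k-1, hk1⟩ : Fin k) : ℕ), by omega⟩ : Fin (k+k)) =
        Fin.natAdd k (σ.symm ⟨k-1, hk1⟩) := Fin.ext rfl
      rw [hFa, hFb, pds_castAdd, pds_natAdd, htσ]
      simp only [Fin.coe_castAdd, Fin.coe_natAdd, Fin.val_mk]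
      have := (σ (⟨(a:ℕ), ha⟩ : Fin k)).isLt
      constructor <;> intro <;> omega
    · rw [dif_neg (by omega), dif_pos hb, hv' a (by omega), hv b hb]
      have hFa : (⟨k + ((σ.symm ⟨k-1, hk1⟩ : Fin k) : ℕ), by omega⟩ : Fin (k+k)) =
        Fin.natAdd k (σ.symm ⟨k-1, hk1⟩) := Fin.ext rfl
      have hFb : (⟨(b:ℕ), by omega⟩ : Fin (k+k)) = Fin.castAdd k ⟨(b:ℕ), hb⟩ := Fin.ext rfl
      rw [hFa, hFb, pds_natAdd, pds_castAdd, htσ]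
      simp only [Fin.coe_castAdd, Fin.coe_natAdd, Fin.val_mk]
      have := (σ (⟨(b:ℕ), hb⟩ : Fin k)).isLt
      constructor <;> intro <;> omega
    · rw [dif_neg (by omega), dif_neg (by omega), hv' a (by omega), hv' b (by omega)]
      simp

set_option maxHeartbeats 1000000 in
lemma ple_1s_ss {k : ℕ} (hk : 2 ≤ k) (σ : Equiv.Perm (Fin k)) :
    ple ⟨1 + k, pds (1 : Equiv.Perm (Fin 1)) σ⟩ ⟨k + k, pds σ σ⟩ := by
  have hk0 : (0:ℕ) < k := by omega
  have hbσ : σ (σ.symm ⟨0, hk0⟩) = ⟨0, hk0⟩ := σ.apply_symm_apply _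
  have hblt : ((σ.symm ⟨0, hk0⟩ : Fin k) : ℕ) < k := (σ.symm _).isLt
  refine ⟨fun i =>
    if h : (i:ℕ) < 1 then (⟨((σ.symm ⟨0, hk0⟩ : Fin k) : ℕ), by omega⟩ : Fin (k+k))
    else (⟨k + ((i:ℕ) - 1), by have : (i:ℕ) < 1 + k := i.isLt; omega⟩ : Fin (k+k)),
    ?_, ?_⟩
  · intro a b hab
    have ha1 : (a:ℕ) < 1 + k := a.isLt
    have hb1 : (b:ℕ) < 1 + k := b.isLt
    have hab' : (a:ℕ) < (b:ℕ) := hab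
    rcases Nat.lt_or_ge (a:ℕ) 1 with ha | ha
    · have hb : ¬((b:ℕ) < 1) := by omega
      show (if h : (a:ℕ) < 1 then (⟨_, _⟩ : Fin (k+k)) else ⟨k + _, _⟩) <
          (if h : (b:ℕ) < 1 then (⟨_, _⟩ : Fin (k+k)) else ⟨k + _, _⟩)
      rw [dif_pos ha, dif_neg hb]
      show ((σ.symm ⟨0, hk0⟩ : Fin k) : ℕ) < k + ((b:ℕ) - 1)
      omega
    · have hb : ¬((b:ℕ) < 1) := by omega
      show (if h : (a:ℕ) < 1 then (⟨_, _⟩ : Fin (k+k)) else ⟨k + _, _⟩) <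
          (if h : (b:ℕ) < 1 then (⟨_, _⟩ : Fin (k+k)) else ⟨k + _, _⟩)
      rw [dif_neg (by omega), dif_neg hb]
      show k + ((a:ℕ) - 1) < k + ((b:ℕ) - 1)
      omega
  · intro a b
    have ha1 : (a:ℕ) < 1 + k := a.isLt
    have hb1 : (b:ℕ) < 1 + k := b.isLt
    have hv : ∀ (c : Fin (1+k)), (c:ℕ) < 1 →
        ((pds (1:Equiv.Perm (Fin 1)) σ) c : ℕ) = 0 := by
      intro c h
      rw [pds_val_lt _ _ _ h]
      have := ((1 : Equiv.Perm (Fin 1)) ⟨(c:ℕ), h⟩).isLt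
      omega
    have hv' : ∀ (c : Fin (1+k)) (h : ¬((c:ℕ) < 1)),
        ((pds (1:Equiv.Perm (Fin 1)) σ) c : ℕ) = 1 + σ ⟨(c:ℕ) - 1, by have := c.isLt; omega⟩ := by
      intro c h
      rw [pds_val_ge _ _ _ (by omega)]
    dsimp only
    rw [Fin.le_def, Fin.le_def]
    rcases Nat.lt_or_ge (a:ℕ) 1 with ha | ha <;> rcases Nat.lt_or_ge (b:ℕ) 1 with hb | hb
    · have hab : a = b := Fin.ext (by omega)
      subst hab
      exact iff_of_true (le_refl _) (le_refl _)
    · rw [dif_pos ha, dif_neg (by omega), hv a ha, hv' b (by omega)]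
      have hFa : (⟨((σ.symm ⟨0, hk0⟩ : Fin k) : ℕ), by omega⟩ : Fin (k+k)) =
        Fin.castAdd k (σ.symm ⟨0, hk0⟩) := Fin.ext rfl
      have hFb : (⟨k + ((b:ℕ) - 1), by omega⟩ : Fin (k+k)) =
        Fin.natAdd k ⟨(b:ℕ) - 1, by omega⟩ := Fin.ext rfl
      rw [hFa, hFb, pds_castAdd, pds_natAdd, hbσ]
      simp only [Fin.coe_castAdd, Fin.coe_natAdd, Fin.val_mk]
      constructor <;> intro <;> omega
    · rw [dif_neg (by omega), dif_pos hb, hv' a (by omega), hv b hb]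
      have hFa : (⟨k + ((a:ℕ) - 1), by omega⟩ : Fin (k+k)) =
        Fin.natAdd k ⟨(a:ℕ) - 1, by omega⟩ := Fin.ext rfl
      have hFb : (⟨((σ.symm ⟨0, hk0⟩ : Fin k) : ℕ), by omega⟩ : Fin (k+k)) =
        Fin.castAdd k (σ.symm ⟨0, hk0⟩) := Fin.ext rfl
      rw [hFa, hFb, pds_natAdd, pds_castAdd, hbσ]
      simp only [Fin.coe_castAdd, Fin.coe_natAdd, Fin.val_mk]
      constructor <;> intro <;> omega
    · rw [dif_neg (by omega), dif_neg (by omega), hv' a (by omega), hv' b (by omega)]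
      have hFa : (⟨k + ((a:ℕ) - 1), by omega⟩ : Fin (k+k)) =
        Fin.natAdd k ⟨(a:ℕ) - 1, by omega⟩ := Fin.ext rfl
      have hFb : (⟨k + ((b:ℕ) - 1), by omega⟩ : Fin (k+k)) =
        Fin.natAdd k ⟨(b:ℕ) - 1, by omega⟩ := Fin.ext rfl
      rw [hFa, hFb, pds_natAdd, pds_natAdd]
      simp only [Fin.coe_natAdd]
      constructor <;> intro <;> omega

lemma sset_witness {k : ℕ} (hk : 2 ≤ k) (σ : Equiv.Perm (Fin k)) (hσ : ¬ Decomp σ) :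
    (⟨k + 1, pds σ (1 : Equiv.Perm (Fin 1))⟩ : PermPt) ∈ Sset k σ := by
  refine ⟨⟨⟨ple_pds_left σ 1, fun hc => ?_⟩, ⟨ple_s1_ss hk σ, fun hc => ?_⟩⟩,
    1, one_pos, 1, rfl, fun f hf hp x => uniq_pre (by omega) σ hσ 1 f hf hp x⟩
  · have h2 : k + 1 ≤ k := ple_len hc
    omega
  · have h2 : k + k ≤ k + 1 := ple_len hc
    omega

lemma tset_witness {k : ℕ} (hk : 2 ≤ k) (σ : Equiv.Perm (Fin k)) (hσ : ¬ Decomp σ) :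
    (⟨1 + k, pds (1 : Equiv.Perm (Fin 1)) σ⟩ : PermPt) ∈ Tset k σ := by
  refine ⟨⟨⟨ple_pds_right σ 1, fun hc => ?_⟩, ⟨ple_1s_ss hk σ, fun hc => ?_⟩⟩,
    1, one_pos, 1, rfl, fun f hf hp x => uniq_suf (by omega) σ hσ 1 f hf hp x⟩
  · have h2 : 1 + k ≤ k := ple_len hc
    omega
  · have h2 : k + k ≤ 1 + k := ple_len hc
    omega

lemma st_disjoint {k : ℕ} (hk : 2 ≤ k) (σ : Equiv.Perm (Fin k)) :
    Disjoint (Sset k σ) (Tset k σ) := by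
  rw [Set.disjoint_left]
  rintro π ⟨-, m, hm, ρ, rfl, huniq⟩ ⟨-, m', hm', ρ', heq', huniq'⟩
  obtain ⟨f, hf, hp⟩ := ple_pds_left σ ρ
  have h0 : (0:ℕ) < k := by omega
  have h1 := huniq' f hf hp ⟨0, h0⟩
  have h2 := huniq f hf hp ⟨0, h0⟩
  omega

lemma st_nocomp {k : ℕ} (hk : 2 ≤ k) (σ : Equiv.Perm (Fin k)) (hσ : ¬ Decomp σ) :
    ∀ x ∈ Sset k σ, ∀ y ∈ Tset k σ, ¬ ple x y ∧ ¬ ple y x := by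
  rintro x ⟨-, m, hm, ρ, rfl, huX⟩ y ⟨-, m', hm', ρ', rfl, huY⟩
  constructor
  · rintro ⟨g, hg, hgp⟩
    obtain ⟨f, hf, hp⟩ := ple_pds_left σ ρ
    have hcomp : ∀ z : Fin k, (g (f z) : ℕ) = m' + z :=
      fun z => huY (fun w => g (f w)) (hg.comp hf) (fun a b => (hp a b).trans (hgp _ _)) z
    have hk1 : k - 1 < k := by omega
    have hkm : k < k + m := by omega
    have h1 : (g (f ⟨k-1, hk1⟩) : ℕ) = m' + (k - 1) := hcomp ⟨k-1, hk1⟩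
    have h3 : (f ⟨k-1, hk1⟩ : ℕ) = k - 1 := huX f hf hp ⟨k-1, hk1⟩
    have h2 : f ⟨k-1, hk1⟩ < (⟨k, hkm⟩ : Fin (k+m)) := by
      rw [Fin.lt_def]
      show (f ⟨k-1, hk1⟩ : ℕ) < k
      omega
    have h4 : (g (f ⟨k-1, hk1⟩) : ℕ) < (g (⟨k, hkm⟩ : Fin (k+m)) : ℕ) := hg h2
    have h5 : (g (⟨k, hkm⟩ : Fin (k+m)) : ℕ) < m' + k := (g _).isLt
    omega
  · rintro ⟨g, hg, hgp⟩
    obtain ⟨f, hf, hp⟩ := ple_pds_right σ ρ'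
    have hcomp : ∀ z : Fin k, (g (f z) : ℕ) = z :=
      fun z => huX (fun w => g (f w)) (hg.comp hf) (fun a b => (hp a b).trans (hgp _ _)) z
    have h0 : (0:ℕ) < k := by omega
    have h0' : (0:ℕ) < m' + k := by omega
    have h1 : (g (f ⟨0, h0⟩) : ℕ) = 0 := hcomp ⟨0, h0⟩
    have hfv : (f ⟨0, h0⟩ : ℕ) = m' + 0 := huY f hf hp ⟨0, h0⟩
    have h2 : (⟨0, h0'⟩ : Fin (m'+k)) < f ⟨0, h0⟩ := by
      rw [Fin.lt_def]
      show (0:ℕ) < (f ⟨0, h0⟩ : ℕ)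
      omega
    have h4 : (g (⟨0, h0'⟩ : Fin (m'+k)) : ℕ) < (g (f ⟨0, h0⟩) : ℕ) := hg h2
    omega

lemma pds_val_lt' {m n : ℕ} (α : Equiv.Perm (Fin m)) (β : Equiv.Perm (Fin n))
    (i : Fin (m+n)) (j : Fin m) (hj : (j:ℕ) = (i:ℕ)) (h : (i:ℕ) < m) :
    ((pds α β) i : ℕ) = α j := by
  rw [pds_val_lt α β i h]
  exact (congrArg (fun z => ((α z : Fin m) : ℕ)) (Fin.ext hj)).symm

lemma pds_val_ge' {m n : ℕ} (α : Equiv.Perm (Fin m)) (β : Equiv.Perm (Fin n))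
    (i : Fin (m+n)) (j : Fin n) (hj : (j:ℕ) = (i:ℕ) - m) (h : m ≤ (i:ℕ)) :
    ((pds α β) i : ℕ) = m + β j := by
  rw [pds_val_ge α β i h]
  exact congrArg (fun z => m + ((β z : Fin n) : ℕ)) (Fin.ext hj.symm)

lemma cover {k : ℕ} (hk : 2 ≤ k) (σ : Equiv.Perm (Fin k)) (hσ : ¬ Decomp σ)
    {n : ℕ} (pp : Equiv.Perm (Fin n))
    (h1 : plt ⟨k, σ⟩ ⟨n, pp⟩) (h2 : plt ⟨n, pp⟩ ⟨k + k, pds σ σ⟩) :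
    (⟨n, pp⟩ : PermPt) ∈ Sset k σ ∪ Tset k σ := by
  obtain ⟨f, hf, hfp⟩ := h1.1
  obtain ⟨g, hg, hgp⟩ := h2.1
  have hkn : k ≤ n := ple_len h1.1
  have hn2k : n ≤ k + k := ple_len h2.1
  have hkn' : k ≠ n := by
    rintro rfl
    have hfx : ∀ x : Fin k, f x = x := fun x => Fin.ext (sm_id hf x)
    exact h1.2 ⟨fun x => x, fun a b hab => hab, fun a b => by
      have h5 := (hfp a b).symm; rwa [hfx a, hfx b] at h5⟩
  have hn2k' : n ≠ k + k := by
    rintro rfl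
    have hgx : ∀ x, g x = x := fun x => Fin.ext (sm_id hg x)
    exact h2.2 ⟨fun x => x, fun a b hab => hab, fun a b => by
      have h5 := (hgp a b).symm; rwa [hgx a, hgx b] at h5⟩
  have hgfsm : StrictMono (fun x : Fin k => g (f x)) := hg.comp hf
  have hgfp : ∀ a b : Fin k, σ a ≤ σ b ↔ (pds σ σ) (g (f a)) ≤ (pds σ σ) (g (f b)) :=
    fun a b => (hfp a b).trans (hgp _ _)
  rcases split_occurrence σ hσ σ σ (fun x => g (f x)) hgfsm hgfp with hA | hB
  · -- Case A : σ occurs in the first block, π = σ ⊕ ρ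
    left
    obtain ⟨m, rfl⟩ : ∃ m, n = k + m := ⟨n - k, by omega⟩
    have hm0 : 0 < m := by omega
    have hmk : m < k := by omega
    have hfp' : ∀ a b : Fin k, σ a ≤ σ b ↔ pp (f a) ≤ pp (f b) := hfp
    have hgp' : ∀ a b : Fin (k+m), pp a ≤ pp b ↔ (pds σ σ) (g a) ≤ (pds σ σ) (g b) := hgp
    have hgf : ∀ x : Fin k, (g (f x) : ℕ) = x := by
      intro x
      have hsm : StrictMono (fun z : Fin k => (⟨(g (f z) : ℕ), hA z⟩ : Fin k)) := by
        intro a b hab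
        have h5 := hgfsm hab
        rw [Fin.lt_def] at *
        simpa using h5
      simpa using sm_id hsm x
    have hfid : ∀ x : Fin k, (f x : ℕ) = x := by
      intro x
      have hx1 := sm_ge hf x
      have hxk : (x:ℕ) < k + m := by have := x.isLt; omega
      have h5 := sm_add hg ⟨(x:ℕ), hxk⟩ (f x) (by simp only [Fin.val_mk]; exact hx1)
      have h6 := sm_ge hg ⟨(x:ℕ), hxk⟩
      have h7 := hgf x
      simp only [Fin.val_mk] at h5 h6
      omega
    have hgid : ∀ i : Fin (k+m), (i:ℕ) < k → (g i : ℕ) = i := by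
      intro i hi
      have h5 : f ⟨(i:ℕ), hi⟩ = i := Fin.ext (by rw [hfid ⟨(i:ℕ), hi⟩])
      conv_lhs => rw [← h5]
      exact hgf ⟨(i:ℕ), hi⟩
    have hkk : k - 1 < k + m := by omega
    have hgk : ∀ i : Fin (k+m), k ≤ (i:ℕ) → k ≤ (g i : ℕ) := by
      intro i hi
      have hlt : (⟨k-1, hkk⟩ : Fin (k+m)) < i := by
        rw [Fin.lt_def]; simp only [Fin.val_mk]; omega
      have h4 : (g ⟨k-1, hkk⟩ : ℕ) < (g i : ℕ) := hg hlt
      have h5 : (g ⟨k-1, hkk⟩ : ℕ) = k - 1 := by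
        rw [hgid ⟨k-1, hkk⟩ (by simp only [Fin.val_mk]; omega)]
      omega
    have hsep : ∀ x y : Fin (k+m), (x:ℕ) < k → k ≤ (y:ℕ) → pp x < pp y := by
      intro x y hx hy
      have hvx : ((pds σ σ) (g x) : ℕ) < k := by
        rw [pds_val_lt σ σ _ (by rw [hgid x hx]; exact hx)]
        exact (σ _).isLt
      have hvy : k ≤ ((pds σ σ) (g y) : ℕ) := by
        rw [pds_val_ge σ σ _ (hgk y hy)]
        omega
      have hle : pp x ≤ pp y := (hgp' x y).mpr (by rw [Fin.le_def]; omega)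
      have hne : ¬ pp y ≤ pp x := fun hc => by
        have h5 := (hgp' y x).mp hc; rw [Fin.le_def] at h5; omega
      exact lt_of_le_not_ge hle hne
    have hkltn : k < k + m := by omega
    have hlo := sep_lo pp k hkltn hsep
    have hhi := sep_hi pp k hkltn hsep
    have hxkm : ∀ x : Fin k, (x:ℕ) < k + m := fun x => by have := x.isLt; omega
    have hppx : ∀ x : Fin k, (pp ⟨(x:ℕ), hxkm x⟩ : ℕ) < k := fun x => hlo _ x.isLt
    have hτinj : Function.Injective
        (fun x : Fin k => (⟨(pp ⟨(x:ℕ), hxkm x⟩ : ℕ), hppx x⟩ : Fin k)) := by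
      intro a b hab
      dsimp only at hab
      have h5 := congrArg Fin.val hab
      simp only [Fin.val_mk] at h5
      have h7 := pp.injective (Fin.ext h5)
      have h8 := congrArg Fin.val h7
      simp only [Fin.val_mk] at h8
      exact Fin.ext h8
    have hτpat : ∀ a b : Fin k, σ a ≤ σ b ↔
        (⟨(pp ⟨(a:ℕ), hxkm a⟩ : ℕ), hppx a⟩ : Fin k) ≤ ⟨(pp ⟨(b:ℕ), hxkm b⟩ : ℕ), hppx b⟩ := by
      intro a b
      have hfa : f a = ⟨(a:ℕ), hxkm a⟩ := Fin.ext (hfid a)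
      have hfb : f b = ⟨(b:ℕ), hxkm b⟩ := Fin.ext (hfid b)
      have h5 := hfp' a b
      rw [hfa, hfb] at h5
      rw [h5]
      constructor
      · intro h6; exact h6
      · intro h6; exact h6
    have hpre : ∀ x : Fin k, (pp ⟨(x:ℕ), hxkm x⟩ : ℕ) = σ x :=
      fun x => pattern_rigid σ _ hτinj hτpat x
    have hkim : ∀ i : Fin m, k + (i:ℕ) < k + m := fun i => by have := i.isLt; omega
    have hppk : ∀ i : Fin m, k ≤ (pp ⟨k + (i:ℕ), hkim i⟩ : ℕ) :=
      fun i => hhi _ (by simp only [Fin.val_mk]; omega)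
    have hpplt : ∀ i : Fin m, (pp ⟨k + (i:ℕ), hkim i⟩ : ℕ) - k < m := fun i => by
      have h5 : (pp ⟨k + (i:ℕ), hkim i⟩ : ℕ) < k + m := (pp _).isLt
      have := hppk i; omega
    have hρinj : Function.Injective
        (fun i : Fin m => (⟨(pp ⟨k + (i:ℕ), hkim i⟩ : ℕ) - k, hpplt i⟩ : Fin m)) := by
      intro a b hab
      dsimp only at hab
      have h5 := congrArg Fin.val hab
      simp only [Fin.val_mk] at h5
      have h6 : (pp ⟨k + (a:ℕ), hkim a⟩ : ℕ) = (pp ⟨k + (b:ℕ), hkim b⟩ : ℕ) := by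
        have := hppk a; have := hppk b; omega
      have h7 := pp.injective (Fin.ext h6)
      have h8 := congrArg Fin.val h7
      simp only [Fin.val_mk] at h8
      exact Fin.ext (by omega)
    set ρ : Equiv.Perm (Fin m) :=
      Equiv.ofBijective _ (Finite.injective_iff_bijective.mp hρinj) with hρdef
    have hρval : ∀ i : Fin m, (ρ i : ℕ) = (pp ⟨k + (i:ℕ), hkim i⟩ : ℕ) - k := fun i => rfl
    have hppeq : pp = pds σ ρ := by
      apply Equiv.ext
      intro i
      apply Fin.ext
      rcases Nat.lt_or_ge (i:ℕ) k with hik | hik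
      · rw [pds_val_lt' σ ρ i ⟨(i:ℕ), hik⟩ rfl hik]
        have h5 : (⟨((⟨(i:ℕ), hik⟩ : Fin k) : ℕ), hxkm ⟨(i:ℕ), hik⟩⟩ : Fin (k+m)) = i :=
          Fin.ext rfl
        have h6 := hpre ⟨(i:ℕ), hik⟩
        rw [h5] at h6
        exact h6
      · have him : (i:ℕ) - k < m := by have := i.isLt; omega
        rw [pds_val_ge' σ ρ i ⟨(i:ℕ) - k, him⟩ (by simp only [Fin.val_mk]) hik]
        rw [hρval ⟨(i:ℕ) - k, him⟩]
        have h6 : (⟨k + ((⟨(i:ℕ) - k, him⟩ : Fin m) : ℕ), hkim ⟨(i:ℕ) - k, him⟩⟩ : Fin (k+m)) = i :=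
          Fin.ext (by simp only [Fin.val_mk]; omega)
        rw [h6]
        have h7 := hhi i hik
        omega
    refine ⟨⟨h1, h2⟩, m, hm0, ρ, ?_, ?_⟩
    · exact congrArg (fun e => (⟨k + m, e⟩ : PermPt)) hppeq
    · intro f' hf' hp' x
      refine uniq_pre hmk σ hσ ρ f' hf' ?_ x
      intro a b
      rw [← hppeq]
      exact hp' a b
  · -- Case B : σ occurs in the second block, π = ρ ⊕ σ
    right
    obtain ⟨m, rfl⟩ : ∃ m, n = m + k := ⟨n - k, by omega⟩
    have hm0 : 0 < m := by omega
    have hmk : m < k := by omega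
    have hfp' : ∀ a b : Fin k, σ a ≤ σ b ↔ pp (f a) ≤ pp (f b) := hfp
    have hgp' : ∀ a b : Fin (m+k), pp a ≤ pp b ↔ (pds σ σ) (g a) ≤ (pds σ σ) (g b) := hgp
    have hf' : StrictMono (f : Fin k → Fin (m+k)) := hf
    have hg' : StrictMono (g : Fin (m+k) → Fin (k+k)) := hg
    have hgf : ∀ x : Fin k, (g (f x) : ℕ) = k + x := by
      intro x
      have hlt : ∀ z : Fin k, (g (f z) : ℕ) - k < k := fun z => by
        have hz : (g (f z) : ℕ) < k + k := (g (f z)).isLt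
        have := hB z; omega
      have hsm : StrictMono (fun z : Fin k => (⟨(g (f z) : ℕ) - k, hlt z⟩ : Fin k)) := by
        intro a b hab
        have h5 := hgfsm hab
        have h6 := hB a
        rw [Fin.lt_def] at *
        simp only [Fin.val_mk] at *
        omega
      have h7 := sm_id hsm x
      simp only [Fin.val_mk] at h7
      have h8 := hB x
      omega
    have hfmx : ∀ x : Fin k, (f x : ℕ) = m + x := by
      intro x
      have hk1 : k - 1 < k := by omega
      have hxlt : (x:ℕ) < k := x.isLt
      have hup1 := sm_add hf' x ⟨k-1, hk1⟩ (by simp only [Fin.val_mk]; omega)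
      have hup2 : (f ⟨k-1, hk1⟩ : ℕ) < m + k := (f _).isLt
      have hn1 : m + k - 1 < m + k := by omega
      have hle : (f x : ℕ) ≤ m + k - 1 := by
        have h9 : (f x : ℕ) < m + k := (f x).isLt; omega
      have hlow1 := sm_add hg' (f x) ⟨m + k - 1, hn1⟩ (by simp only [Fin.val_mk]; omega)
      have hlow2 : (g ⟨m + k - 1, hn1⟩ : ℕ) < k + k := (g _).isLt
      have h5 := hgf x
      simp only [Fin.val_mk] at hup1 hlow1
      omega
    have hgs : ∀ i : Fin (m+k), m ≤ (i:ℕ) → (g i : ℕ) = k + ((i:ℕ) - m) := by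
      intro i hi
      have him : (i:ℕ) - m < k := by have := i.isLt; omega
      have h5 : f ⟨(i:ℕ) - m, him⟩ = i :=
        Fin.ext (by rw [hfmx ⟨(i:ℕ) - m, him⟩]; simp only [Fin.val_mk]; omega)
      conv_lhs => rw [← h5]
      have h6 := hgf ⟨(i:ℕ) - m, him⟩
      simp only [Fin.val_mk] at h6
      omega
    have hmkm : m < m + k := by omega
    have hglt : ∀ i : Fin (m+k), (i:ℕ) < m → (g i : ℕ) < k := by
      intro i hi
      have hlt : i < (⟨m, hmkm⟩ : Fin (m+k)) := by
        rw [Fin.lt_def]; simp only [Fin.val_mk]; omega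
      have h4 : (g i : ℕ) < (g ⟨m, hmkm⟩ : ℕ) := hg hlt
      have h5 : (g (⟨m, hmkm⟩ : Fin (m+k)) : ℕ) = k + (m - m) :=
        hgs _ (by simp only [Fin.val_mk]; exact le_rfl)
      omega
    have hsep : ∀ x y : Fin (m+k), (x:ℕ) < m → m ≤ (y:ℕ) → pp x < pp y := by
      intro x y hx hy
      have hvx : ((pds σ σ) (g x) : ℕ) < k := by
        rw [pds_val_lt σ σ _ (hglt x hx)]
        exact (σ _).isLt
      have hvy : k ≤ ((pds σ σ) (g y) : ℕ) := by
        rw [pds_val_ge σ σ _ (by rw [hgs y hy]; omega)]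
        omega
      have hle : pp x ≤ pp y := (hgp' x y).mpr (by rw [Fin.le_def]; omega)
      have hne : ¬ pp y ≤ pp x := fun hc => by
        have h5 := (hgp' y x).mp hc; rw [Fin.le_def] at h5; omega
      exact lt_of_le_not_ge hle hne
    have hlo := sep_lo pp m hmkm hsep
    have hhi := sep_hi pp m hmkm hsep
    have hmxk : ∀ x : Fin k, m + (x:ℕ) < m + k := fun x => by have := x.isLt; omega
    have hppge : ∀ x : Fin k, m ≤ (pp ⟨m + (x:ℕ), hmxk x⟩ : ℕ) :=
      fun x => hhi _ (by simp only [Fin.val_mk]; omega)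
    have hpplt : ∀ x : Fin k, (pp ⟨m + (x:ℕ), hmxk x⟩ : ℕ) - m < k := fun x => by
      have h5 : (pp ⟨m + (x:ℕ), hmxk x⟩ : ℕ) < m + k := (pp _).isLt
      have := hppge x; omega
    have hτinj : Function.Injective
        (fun x : Fin k => (⟨(pp ⟨m + (x:ℕ), hmxk x⟩ : ℕ) - m, hpplt x⟩ : Fin k)) := by
      intro a b hab
      dsimp only at hab
      have h5 := congrArg Fin.val hab
      simp only [Fin.val_mk] at h5
      have h6 : (pp ⟨m + (a:ℕ), hmxk a⟩ : ℕ) = (pp ⟨m + (b:ℕ), hmxk b⟩ : ℕ) := by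
        have := hppge a; have := hppge b; omega
      have h7 := pp.injective (Fin.ext h6)
      have h8 := congrArg Fin.val h7
      simp only [Fin.val_mk] at h8
      exact Fin.ext (by omega)
    have hτpat : ∀ a b : Fin k, σ a ≤ σ b ↔
        (⟨(pp ⟨m + (a:ℕ), hmxk a⟩ : ℕ) - m, hpplt a⟩ : Fin k) ≤
          ⟨(pp ⟨m + (b:ℕ), hmxk b⟩ : ℕ) - m, hpplt b⟩ := by
      intro a b
      have hfa : f a = ⟨m + (a:ℕ), hmxk a⟩ := Fin.ext (hfmx a)
      have hfb : f b = ⟨m + (b:ℕ), hmxk b⟩ := Fin.ext (hfmx b)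
      have h5 := hfp' a b
      rw [hfa, hfb] at h5
      rw [h5, Fin.le_def, Fin.le_def]
      simp only [Fin.val_mk]
      have := hppge a; have := hppge b
      omega
    have hsuf : ∀ x : Fin k, (pp ⟨m + (x:ℕ), hmxk x⟩ : ℕ) - m = σ x :=
      fun x => pattern_rigid σ _ hτinj hτpat x
    have himn : ∀ i : Fin m, (i:ℕ) < m + k := fun i => by have := i.isLt; omega
    have hpplo : ∀ i : Fin m, (pp ⟨(i:ℕ), himn i⟩ : ℕ) < m := fun i => hlo _ i.isLt
    have hρinj : Function.Injective
        (fun i : Fin m => (⟨(pp ⟨(i:ℕ), himn i⟩ : ℕ), hpplo i⟩ : Fin m)) := by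
      intro a b hab
      dsimp only at hab
      have h5 := congrArg Fin.val hab
      simp only [Fin.val_mk] at h5
      have h7 := pp.injective (Fin.ext h5)
      have h8 := congrArg Fin.val h7
      simp only [Fin.val_mk] at h8
      exact Fin.ext h8
    set ρ : Equiv.Perm (Fin m) :=
      Equiv.ofBijective _ (Finite.injective_iff_bijective.mp hρinj) with hρdef
    have hρval : ∀ i : Fin m, (ρ i : ℕ) = (pp ⟨(i:ℕ), himn i⟩ : ℕ) := fun i => rfl
    have hppeq : pp = pds ρ σ := by
      apply Equiv.ext
      intro i
      apply Fin.ext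
      rcases Nat.lt_or_ge (i:ℕ) m with him | him
      · rw [pds_val_lt' ρ σ i ⟨(i:ℕ), him⟩ rfl him]
        rw [hρval ⟨(i:ℕ), him⟩]
      · have hik : (i:ℕ) - m < k := by have := i.isLt; omega
        rw [pds_val_ge' ρ σ i ⟨(i:ℕ) - m, hik⟩ (by simp only [Fin.val_mk]) him]
        have h7 := hsuf ⟨(i:ℕ) - m, hik⟩
        have h6 : (⟨m + ((⟨(i:ℕ) - m, hik⟩ : Fin k) : ℕ), hmxk ⟨(i:ℕ) - m, hik⟩⟩ : Fin (m+k)) = i :=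
          Fin.ext (by simp only [Fin.val_mk]; omega)
        rw [h6] at h7
        have h8 := hhi i him
        omega
    refine ⟨⟨h1, h2⟩, m, hm0, ρ, ?_, ?_⟩
    · exact congrArg (fun e => (⟨m + k, e⟩ : PermPt)) hppeq
    · intro f' hf'' hp' x
      refine uniq_suf hmk σ hσ ρ f' hf'' ?_ x
      intro a b
      rw [← hppeq]
      exact hp' a b
/-- For `σ` indecomposable of length `k ≥ 2`, the open interval `(σ, σ⊕σ)` is
disconnected: it is the disjoint union of the nonempty sets `S` and `T`,
with no comparabilities between `S` and `T`. -/
theorem open_interval_sigma_sum_disconnected (k : ℕ) (hk : 2 ≤ k)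
    (σ : Equiv.Perm (Fin k)) (hσ : ¬ Decomp σ) :
    Sset k σ ∪ Tset k σ = {π | plt ⟨k, σ⟩ π ∧ plt π ⟨k + k, pds σ σ⟩} ∧
    Disjoint (Sset k σ) (Tset k σ) ∧
    (Sset k σ).Nonempty ∧ (Tset k σ).Nonempty ∧
    (∀ x ∈ Sset k σ, ∀ y ∈ Tset k σ, ¬ ple x y ∧ ¬ ple y x) ∧
    Disconn {π | plt ⟨k, σ⟩ π ∧ plt π ⟨k + k, pds σ σ⟩} := by
  have hunion : Sset k σ ∪ Tset k σ = {π | plt ⟨k, σ⟩ π ∧ plt π ⟨k + k, pds σ σ⟩} := by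
    apply Set.eq_of_subset_of_subset
    · rintro π (⟨⟨ha, hb⟩, -⟩ | ⟨⟨ha, hb⟩, -⟩) <;> exact ⟨ha, hb⟩
    · rintro ⟨n, pp⟩ ⟨ha, hb⟩
      exact cover hk σ hσ pp ha hb
  have hS : (Sset k σ).Nonempty := ⟨_, sset_witness hk σ hσ⟩
  have hT : (Tset k σ).Nonempty := ⟨_, tset_witness hk σ hσ⟩
  have hnc := st_nocomp hk σ hσ
  exact ⟨hunion, st_disjoint hk σ, hS, hT, hnc, Sset k σ, Tset k σ, hunion, hS, hT, hnc⟩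
end

section
/- Let [σ,τ] be an interval in the permutation pattern poset and let α be an indecomposable permutation such that α ⊕ σ is not ≤ τ. Then the map π ↦ α ⊕ π is an order isomorphism from [σ,τ] onto [α⊕σ, α⊕τ]. -/
open scoped Classical

lemma ple_trans {x y z : PermPt} (h1 : ple x y) (h2 : ple y z) : ple x z := by
  obtain ⟨f, hf, hf2⟩ := h1
  obtain ⟨g, hg, hg2⟩ := h2
  exact ⟨g ∘ f, hg.comp hf, fun a b => (hf2 a b).trans (hg2 (f a) (f b))⟩

lemma sm_le {n N : ℕ} {f : Fin n → Fin N} (hf : StrictMono f) (i : Fin n) :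
    (i : ℕ) ≤ (f i : ℕ) := by
  suffices H : ∀ v (h : v < n), v ≤ (f ⟨v, h⟩ : ℕ) by simpa using H i.1 i.2
  intro v
  induction v with
  | zero => intro h; omega
  | succ w ih =>
    intro h
    have hw : w < n := Nat.lt_of_succ_lt h
    have h1 := ih hw
    have h2 : f ⟨w, hw⟩ < f ⟨w + 1, h⟩ := hf (by simp [Fin.lt_def])
    rw [Fin.lt_def] at h2
    omega

lemma sm_fin_id {n : ℕ} {f : Fin n → Fin n} (hf : StrictMono f) : ∀ i, f i = i := by
  have hbij : Function.Bijective f := Finite.injective_iff_bijective.mp hf.injective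
  set e := Equiv.ofBijective f hbij with he
  have hes : StrictMono (e.symm : Fin n → Fin n) := by
    intro a b hab
    by_contra hc
    push_neg at hc
    have : f (e.symm b) ≤ f (e.symm a) := hf.monotone hc
    have hb2 : ∀ x, f (e.symm x) = x := fun x => e.apply_symm_apply x
    rw [hb2, hb2] at this
    omega
  intro i
  have h1 := sm_le hf i
  have h2 := sm_le hes (f i)
  have h3 : e.symm (f i) = i := e.symm_apply_apply i
  rw [h3] at h2
  exact Fin.ext (le_antisymm (by omega) h1)

lemma perm_eq {n : ℕ} (p q : Equiv.Perm (Fin n)) (h : ∀ a b, p a ≤ p b ↔ q a ≤ q b) :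
    p = q := by
  have hs : StrictMono (fun x => q (p.symm x)) := by
    intro a b hab
    have h1 : p (p.symm a) ≤ p (p.symm b) := by
      simpa using le_of_lt hab
    have h2 := (h _ _).mp h1
    have hne : q (p.symm a) ≠ q (p.symm b) := by
      intro he
      exact absurd (by simpa using congrArg p (q.injective he)) (ne_of_lt hab)
    exact lt_of_le_of_ne h2 hne
  ext x
  have h2 := sm_fin_id hs (p x)
  have h3 : q x = p x := by simpa using h2
  rw [h3]

lemma pds_castAdd_s9 {k l : ℕ} (β : Equiv.Perm (Fin k)) (γ : Equiv.Perm (Fin l)) (i : Fin k) :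
    pds β γ (Fin.castAdd l i) = Fin.castAdd l (β i) := by
  simp [pds]

lemma pds_natAdd_s9 {k l : ℕ} (β : Equiv.Perm (Fin k)) (γ : Equiv.Perm (Fin l)) (j : Fin l) :
    pds β γ (Fin.natAdd k j) = Fin.natAdd k (γ j) := by
  simp [pds]

lemma fin_split {k l : ℕ} (x : Fin (k + l)) :
    (∃ i : Fin k, x = Fin.castAdd l i) ∨ (∃ j : Fin l, x = Fin.natAdd k j) := by
  by_cases h : (x : ℕ) < k
  · exact Or.inl ⟨⟨x, h⟩, by ext; simp⟩
  · exact Or.inr ⟨⟨(x : ℕ) - k, by omega⟩, by ext; simp; omega⟩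

lemma pds_val_lt_iff {k l : ℕ} (β : Equiv.Perm (Fin k)) (γ : Equiv.Perm (Fin l))
    (x : Fin (k + l)) : ((pds β γ) x : ℕ) < k ↔ (x : ℕ) < k := by
  rcases fin_split x with ⟨i, rfl⟩ | ⟨j, rfl⟩
  · rw [pds_castAdd_s9]; simp [(β i).isLt, i.isLt]
  · rw [pds_natAdd_s9]; simp

lemma prefix_values {N K : ℕ} (p : Equiv.Perm (Fin N))
    (hsep : ∀ i j : Fin N, (i : ℕ) < K → K ≤ (j : ℕ) → (p i : ℕ) < (p j : ℕ)) :
    ∀ i : Fin N, (i : ℕ) < K → (p i : ℕ) < K := by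
  intro i hi
  by_cases hKN : N ≤ K
  · exact lt_of_lt_of_le (p i).isLt hKN
  push_neg at hKN
  have hN0 : 0 < N := lt_of_le_of_lt (Nat.zero_le K) hKN
  set c : ℕ := (p i : ℕ) with hc
  have hBA : (Finset.univ.filter (fun j : Fin N => (p j : ℕ) ≤ c)) ⊆
      (Finset.univ.filter (fun j : Fin N => (j : ℕ) < K)) := by
    intro j hj
    simp only [Finset.mem_filter, Finset.mem_univ, true_and] at *
    by_contra hK
    push_neg at hK
    exact absurd hj (not_le.mpr (hsep i j hi hK))
  have hA : (Finset.univ.filter (fun j : Fin N => (j : ℕ) < K)).card ≤ K := by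
    have := Finset.card_le_card_of_injOn (fun j : Fin N => (j : ℕ))
      (s := Finset.univ.filter (fun j : Fin N => (j : ℕ) < K)) (t := Finset.range K)
      (by intro a ha; simp only [Finset.mem_coe, Finset.mem_filter, Finset.mem_univ, true_and] at ha
          simpa using ha)
      (fun a _ b _ hab => Fin.ext hab)
    simpa using this
  have hB : c + 1 ≤ (Finset.univ.filter (fun j : Fin N => (p j : ℕ) ≤ c)).card := by
    have := Finset.card_le_card_of_injOn
      (fun v : ℕ => p.symm ⟨v % N, Nat.mod_lt v hN0⟩)
      (s := Finset.range (c + 1))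
      (t := Finset.univ.filter (fun j : Fin N => (p j : ℕ) ≤ c))
      ?_ ?_
    · simpa using this
    · intro v hv
      simp only [Finset.mem_coe, Finset.mem_range] at hv
      have hvN : v < N := by have := (p i).isLt; omega
      simp only [Finset.mem_coe, Finset.mem_filter, Finset.mem_univ, true_and, Equiv.apply_symm_apply]
      show v % N ≤ c
      rw [Nat.mod_eq_of_lt hvN]
      omega
    · intro a ha b hb hab
      simp only [Finset.coe_range, Set.mem_Iio] at ha hb
      have haN : a < N := by have := (p i).isLt; omega
      have hbN : b < N := by have := (p i).isLt; omega
      have := p.symm.injective hab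
      rw [Fin.mk.injEq] at this
      rw [Nat.mod_eq_of_lt haN, Nat.mod_eq_of_lt hbN] at this
      exact this
  have := Finset.card_le_card hBA
  omega

lemma emb_split {N K' L' : ℕ} (p : Equiv.Perm (Fin N)) (β' : Equiv.Perm (Fin K'))
    (γ' : Equiv.Perm (Fin L')) (g : Fin N → Fin (K' + L')) (hg : StrictMono g)
    (hiso : ∀ a b : Fin N, p a ≤ p b ↔ pds β' γ' (g a) ≤ pds β' γ' (g b)) :
    ∃ K, K ≤ N ∧ K ≤ K' ∧ (∀ i : Fin N, ((i : ℕ) < K ↔ (g i : ℕ) < K')) ∧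
      (∀ i : Fin N, (i : ℕ) < K → (p i : ℕ) < K) := by
  have main : ∀ K, K ≤ N → K ≤ K' → (∀ i : Fin N, ((i : ℕ) < K ↔ (g i : ℕ) < K')) →
      ∃ K, K ≤ N ∧ K ≤ K' ∧ (∀ i : Fin N, ((i : ℕ) < K ↔ (g i : ℕ) < K')) ∧
      (∀ i : Fin N, (i : ℕ) < K → (p i : ℕ) < K) := by
    intro K h1 h2 h3
    refine ⟨K, h1, h2, h3, prefix_values p ?_⟩
    intro i j hi hj
    have hgi : (g i : ℕ) < K' := (h3 i).mp hi
    have hgj : K' ≤ (g j : ℕ) := by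
      by_contra hc
      push_neg at hc
      have := (h3 j).mpr hc
      omega
    have hvi : ((pds β' γ' (g i)) : ℕ) < K' := (pds_val_lt_iff β' γ' _).mpr hgi
    have hvj : ¬ ((pds β' γ' (g j)) : ℕ) < K' := by
      rw [pds_val_lt_iff]; omega
    have hle : p i ≤ p j := (hiso i j).mpr (by rw [Fin.le_def]; omega)
    have hne : (p i : ℕ) ≠ (p j : ℕ) := by
      intro hv
      have := p.injective (Fin.ext hv)
      rw [Fin.ext_iff] at this
      omega
    rw [Fin.le_def] at hle
    omega
  by_cases hex : ∃ j : Fin N, K' ≤ (g j : ℕ)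
  · have hQ : ∃ n, ∃ hn : n < N, K' ≤ (g ⟨n, hn⟩ : ℕ) := by
      obtain ⟨j, hj⟩ := hex
      exact ⟨j.1, j.2, by simpa using hj⟩
    obtain ⟨hKlt, hgK⟩ := Nat.find_spec hQ
    have hsplit : ∀ i : Fin N, (i : ℕ) < Nat.find hQ ↔ (g i : ℕ) < K' := by
      intro i
      constructor
      · intro hi
        by_contra hc
        push_neg at hc
        exact Nat.find_min hQ (by exact hi) ⟨i.isLt, by simpa using hc⟩
      · intro hgi
        by_contra hc
        push_neg at hc
        have h5 : g ⟨Nat.find hQ, hKlt⟩ ≤ g i := hg.monotone (by rw [Fin.le_def]; exact hc)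
        rw [Fin.le_def] at h5
        have h6 : K' ≤ (g ⟨Nat.find hQ, hKlt⟩ : ℕ) := hgK
        omega
    have hKK' : Nat.find hQ ≤ K' := by
      rcases Nat.eq_zero_or_pos (Nat.find hQ) with h0 | h0
      · omega
      · have hlt : Nat.find hQ - 1 < N := by omega
        have h1 : ((⟨Nat.find hQ - 1, hlt⟩ : Fin N) : ℕ) < Nat.find hQ :=
          Nat.sub_lt h0 Nat.one_pos
        have h2 : (g ⟨Nat.find hQ - 1, hlt⟩ : ℕ) < K' := (hsplit _).mp h1
        have h3 : Nat.find hQ - 1 ≤ (g ⟨Nat.find hQ - 1, hlt⟩ : ℕ) :=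
          sm_le hg ⟨Nat.find hQ - 1, hlt⟩
        omega
    exact main (Nat.find hQ) (le_of_lt hKlt) hKK' hsplit
  · push_neg at hex
    have hNK' : N ≤ K' := by
      rcases Nat.eq_zero_or_pos N with h0 | h0
      · omega
      · have hlt : N - 1 < N := by omega
        have h1 : N - 1 ≤ (g ⟨N - 1, hlt⟩ : ℕ) := sm_le hg ⟨N - 1, hlt⟩
        have h2 := hex ⟨N - 1, hlt⟩
        omega
    exact main N le_rfl hNK' (fun i => ⟨fun _ => hex i, fun _ => i.isLt⟩)


lemma decompose {k l : ℕ} (p : Equiv.Perm (Fin (k + l)))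
    (hp : ∀ i : Fin (k + l), (i : ℕ) < k → (p i : ℕ) < k) :
    ∃ (β : Equiv.Perm (Fin k)) (γ : Equiv.Perm (Fin l)), p = pds β γ := by
  have hβval : ∀ i : Fin k, (p (Fin.castAdd l i) : ℕ) < k := fun i => hp _ (by simp)
  have hβinj : Function.Injective
      (fun i : Fin k => (⟨(p (Fin.castAdd l i) : ℕ), hβval i⟩ : Fin k)) := by
    intro a b hab
    rw [Fin.mk.injEq] at hab
    have h2 : (Fin.castAdd l a : Fin (k + l)) = Fin.castAdd l b := p.injective (Fin.ext hab)
    exact Fin.ext (by simpa using congrArg Fin.val h2)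
  have hβbij := Finite.injective_iff_bijective.mp hβinj
  have hβapp : ∀ i : Fin k,
      ((Equiv.ofBijective _ hβbij) i : ℕ) = (p (Fin.castAdd l i) : ℕ) := fun i => rfl
  have hup : ∀ j : Fin l, k ≤ (p (Fin.natAdd k j) : ℕ) := by
    intro j
    by_contra hc
    push_neg at hc
    obtain ⟨i, hi⟩ := hβbij.2 ⟨(p (Fin.natAdd k j) : ℕ), hc⟩
    have h2 : (p (Fin.castAdd l i) : ℕ) = (p (Fin.natAdd k j) : ℕ) := by
      have := congrArg Fin.val hi
      simpa using this
    have h3 : (Fin.castAdd l i : Fin (k + l)) = Fin.natAdd k j := p.injective (Fin.ext h2)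
    have h4 := congrArg Fin.val h3
    simp at h4
    have := i.isLt
    omega
  have hγval : ∀ j : Fin l, (p (Fin.natAdd k j) : ℕ) - k < l := by
    intro j
    have := (p (Fin.natAdd k j)).isLt
    have := hup j
    omega
  have hγinj : Function.Injective
      (fun j : Fin l => (⟨(p (Fin.natAdd k j) : ℕ) - k, hγval j⟩ : Fin l)) := by
    intro a b hab
    rw [Fin.mk.injEq] at hab
    have ha := hup a
    have hb := hup b
    have h2 : (p (Fin.natAdd k a) : ℕ) = (p (Fin.natAdd k b) : ℕ) := by omega
    have h3 : (Fin.natAdd k a : Fin (k + l)) = Fin.natAdd k b := p.injective (Fin.ext h2)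
    have h4 := congrArg Fin.val h3
    simp at h4
    exact Fin.ext h4
  have hγbij := Finite.injective_iff_bijective.mp hγinj
  have hγapp : ∀ j : Fin l,
      ((Equiv.ofBijective _ hγbij) j : ℕ) = (p (Fin.natAdd k j) : ℕ) - k := fun j => rfl
  refine ⟨Equiv.ofBijective _ hβbij, Equiv.ofBijective _ hγbij, ?_⟩
  ext x
  rcases fin_split x with ⟨i, rfl⟩ | ⟨j, rfl⟩
  · rw [pds_castAdd_s9]
    simp [hβapp]
  · rw [pds_natAdd_s9]
    have := hup j
    simp only [Fin.coe_natAdd]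
    rw [hγapp]
    omega

lemma emb_upper {K L K' L' : ℕ} (β : Equiv.Perm (Fin K)) (γ : Equiv.Perm (Fin L))
    (β' : Equiv.Perm (Fin K')) (γ' : Equiv.Perm (Fin L'))
    (g : Fin (K + L) → Fin (K' + L')) (hg : StrictMono g)
    (hiso : ∀ a b, pds β γ a ≤ pds β γ b ↔ pds β' γ' (g a) ≤ pds β' γ' (g b))
    (hsplit : ∀ i : Fin (K + L), K ≤ (i : ℕ) → K' ≤ (g i : ℕ)) :
    ple ⟨L, γ⟩ ⟨L', γ'⟩ := by
  have hb : ∀ j : Fin L, K' ≤ (g (Fin.natAdd K j) : ℕ) := fun j => hsplit _ (by simp)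
  have hb2 : ∀ j : Fin L, (g (Fin.natAdd K j) : ℕ) - K' < L' := by
    intro j
    have := (g (Fin.natAdd K j)).isLt
    have := hb j
    omega
  refine ⟨fun j => ⟨(g (Fin.natAdd K j) : ℕ) - K', hb2 j⟩, ?_, ?_⟩
  · intro a b hab
    have h1 : (Fin.natAdd K a : Fin (K + L)) < Fin.natAdd K b := by
      rw [Fin.lt_def]
      simp only [Fin.coe_natAdd]
      exact Nat.add_lt_add_left hab K
    have h2 := hg h1
    rw [Fin.lt_def] at h2 ⊢
    show (g (Fin.natAdd K a) : ℕ) - K' < (g (Fin.natAdd K b) : ℕ) - K'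
    have := hb a
    have := hb b
    omega
  · intro a b
    have hgf : ∀ j : Fin L, g (Fin.natAdd K j) =
        Fin.natAdd K' (⟨(g (Fin.natAdd K j) : ℕ) - K', hb2 j⟩ : Fin L') := by
      intro j
      have := hb j
      ext
      simp only [Fin.coe_natAdd]
      omega
    have h2 := hiso (Fin.natAdd K a) (Fin.natAdd K b)
    rw [pds_natAdd_s9, pds_natAdd_s9, hgf a, hgf b, pds_natAdd_s9, pds_natAdd_s9] at h2
    rw [Fin.le_def, Fin.le_def] at h2
    simp only [Fin.coe_natAdd] at h2
    show γ a ≤ γ b ↔ γ' ⟨(g (Fin.natAdd K a) : ℕ) - K', hb2 a⟩ ≤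
      γ' ⟨(g (Fin.natAdd K b) : ℕ) - K', hb2 b⟩
    rw [Fin.le_def, Fin.le_def]
    constructor <;> intro hx
    · have := h2.mp (by omega); omega
    · have := h2.mpr (by omega); omega

lemma emb_whole_upper {N K' L' : ℕ} (p : Equiv.Perm (Fin N))
    (β' : Equiv.Perm (Fin K')) (γ' : Equiv.Perm (Fin L'))
    (g : Fin N → Fin (K' + L')) (hg : StrictMono g)
    (hiso : ∀ a b, p a ≤ p b ↔ pds β' γ' (g a) ≤ pds β' γ' (g b))
    (hsplit : ∀ i : Fin N, K' ≤ (g i : ℕ)) :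
    ple ⟨N, p⟩ ⟨L', γ'⟩ := by
  have hb2 : ∀ i : Fin N, (g i : ℕ) - K' < L' := by
    intro i
    have := (g i).isLt
    have := hsplit i
    omega
  refine ⟨fun i => ⟨(g i : ℕ) - K', hb2 i⟩, ?_, ?_⟩
  · intro a b hab
    have h2 := hg hab
    rw [Fin.lt_def] at h2 ⊢
    show (g a : ℕ) - K' < (g b : ℕ) - K'
    have := hsplit a
    have := hsplit b
    omega
  · intro a b
    have hgf : ∀ i : Fin N, g i = Fin.natAdd K' (⟨(g i : ℕ) - K', hb2 i⟩ : Fin L') := by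
      intro i
      have := hsplit i
      ext
      simp only [Fin.coe_natAdd]
      omega
    have h2 := hiso a b
    rw [hgf a, hgf b, pds_natAdd_s9, pds_natAdd_s9] at h2
    show p a ≤ p b ↔ γ' ⟨(g a : ℕ) - K', hb2 a⟩ ≤ γ' ⟨(g b : ℕ) - K', hb2 b⟩
    rw [Fin.le_def, Fin.le_def] at h2 ⊢
    simp only [Fin.coe_natAdd] at h2
    constructor <;> intro hx
    · have := h2.mp hx; omega
    · exact h2.mpr (by omega)

lemma pds_mono {x y : PermPt} (a : PermPt) (hxy : ple x y) :
    ple (pdsP a x) (pdsP a y) := by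
  obtain ⟨f, hf, hiso⟩ := hxy
  set m := a.1 with hm
  have hGb : ∀ i : Fin (m + x.1), ¬ (i : ℕ) < m → (i : ℕ) - m < x.1 := by
    intro i hi
    have := i.isLt
    omega
  have hfb : ∀ (j : ℕ) (hj : j < x.1), m + (f ⟨j, hj⟩ : ℕ) < m + y.1 := by
    intro j hj
    have := (f ⟨j, hj⟩).isLt
    omega
  set G : Fin (m + x.1) → Fin (m + y.1) := fun i =>
    if h : (i : ℕ) < m then ⟨(i : ℕ), by omega⟩
    else ⟨m + (f ⟨(i : ℕ) - m, hGb i h⟩ : ℕ), hfb _ _⟩ with hG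
  have hGval1 : ∀ i : Fin (m + x.1), (hi : (i : ℕ) < m) → (G i : ℕ) = (i : ℕ) := by
    intro i hi
    simp [hG, hi]
  have hGval2 : ∀ i : Fin (m + x.1), (hi : ¬ (i : ℕ) < m) →
      (G i : ℕ) = m + (f ⟨(i : ℕ) - m, hGb i hi⟩ : ℕ) := by
    intro i hi
    simp [hG, hi]
  have hGmono : StrictMono G := by
    intro u v huv
    rw [Fin.lt_def] at huv ⊢
    by_cases hu : (u : ℕ) < m <;> by_cases hv : (v : ℕ) < m
    · rw [hGval1 u hu, hGval1 v hv]; exact huv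
    · rw [hGval1 u hu, hGval2 v hv]; omega
    · omega
    · rw [hGval2 u hu, hGval2 v hv]
      have h1 : (⟨(u : ℕ) - m, hGb u hu⟩ : Fin x.1) < ⟨(v : ℕ) - m, hGb v hv⟩ := by
        rw [Fin.lt_def]
        show (u : ℕ) - m < (v : ℕ) - m
        omega
      have h2 := hf h1
      rw [Fin.lt_def] at h2
      omega
  refine ⟨G, hGmono, ?_⟩
  intro u v
  show pds a.2 x.2 u ≤ pds a.2 x.2 v ↔ pds a.2 y.2 (G u) ≤ pds a.2 y.2 (G v)
  have hGc : ∀ i : Fin m, G (Fin.castAdd x.1 i) = Fin.castAdd y.1 i := by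
    intro i
    ext
    rw [hGval1 _ (by simpa using i.isLt)]
    simp
  have hGn : ∀ i : Fin x.1, G (Fin.natAdd m i) = Fin.natAdd m (f i) := by
    intro i
    ext
    rw [hGval2 _ (by simp)]
    simp only [Fin.coe_natAdd]
    congr 1
    congr 1
    ext
    simp
  rcases fin_split u with ⟨i, rfl⟩ | ⟨i, rfl⟩ <;> rcases fin_split v with ⟨j, rfl⟩ | ⟨j, rfl⟩
  · rw [hGc i, hGc j, pds_castAdd_s9, pds_castAdd_s9, pds_castAdd_s9, pds_castAdd_s9,
      Fin.le_def, Fin.le_def]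
    simp
  · rw [hGc i, hGn j, pds_castAdd_s9, pds_natAdd_s9, pds_castAdd_s9, pds_natAdd_s9,
      Fin.le_def, Fin.le_def]
    simp only [Fin.coe_castAdd, Fin.coe_natAdd]
    have h1 := (a.2 i).isLt
    constructor <;> intro <;> omega
  · rw [hGn i, hGc j, pds_natAdd_s9, pds_castAdd_s9, pds_natAdd_s9, pds_castAdd_s9,
      Fin.le_def, Fin.le_def]
    simp only [Fin.coe_castAdd, Fin.coe_natAdd]
    have h1 := (a.2 j).isLt
    have h2 := (a.2 j).isLt
    constructor <;> intro <;> omega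
  · rw [hGn i, hGn j, pds_natAdd_s9, pds_natAdd_s9, pds_natAdd_s9, pds_natAdd_s9,
      Fin.le_def, Fin.le_def]
    simp only [Fin.coe_natAdd]
    have h2 := hiso i j
    rw [Fin.le_def] at h2
    constructor <;> intro <;> omega

lemma ple_pds_zero (a : Equiv.Perm (Fin 0)) (x : PermPt) :
    ple (pdsP ⟨0, a⟩ x) x := by
  refine ⟨Fin.cast (Nat.zero_add x.1), ?_, ?_⟩
  · intro u v huv
    rw [Fin.lt_def] at huv ⊢
    exact huv
  · intro u v
    show pds a x.2 u ≤ pds a x.2 v ↔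
      x.2 (Fin.cast (Nat.zero_add x.1) u) ≤ x.2 (Fin.cast (Nat.zero_add x.1) v)
    rcases fin_split u with ⟨i, rfl⟩ | ⟨i, rfl⟩
    · exact absurd i.isLt (Nat.not_lt_zero _)
    rcases fin_split v with ⟨j, rfl⟩ | ⟨j, rfl⟩
    · exact absurd j.isLt (Nat.not_lt_zero _)
    have hci : Fin.cast (Nat.zero_add x.1) (Fin.natAdd 0 i) = i := by ext; simp
    have hcj : Fin.cast (Nat.zero_add x.1) (Fin.natAdd 0 j) = j := by ext; simp
    rw [pds_natAdd_s9, pds_natAdd_s9, hci, hcj, Fin.le_def, Fin.le_def]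
    simp

lemma key_L {m : ℕ} (a : Equiv.Perm (Fin m)) (hm : 0 < m) (ha : ¬ Decomp a)
    (x y : PermPt) (hxy : ple (pdsP ⟨m, a⟩ x) (pdsP ⟨m, a⟩ y)) :
    ple x y ∨ ple (pdsP ⟨m, a⟩ x) y := by
  obtain ⟨g, hg, hiso⟩ := hxy
  obtain ⟨K, hK1, hK2, hKsplit, hKpre⟩ := emb_split (pds a x.2) a y.2 g hg hiso
  by_cases hK0 : K = 0
  · right
    have h1 : ∀ i : Fin (m + x.1), m ≤ (g i : ℕ) := by
      intro i
      have := hKsplit i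
      omega
    exact emb_whole_upper (pds a x.2) a y.2 g hg hiso h1
  by_cases hKm : K = m
  · left
    subst hKm
    have h1 : ∀ i : Fin (K + x.1), K ≤ (i : ℕ) → K ≤ (g i : ℕ) := by
      intro i hi
      have := hKsplit i
      omega
    exact emb_upper a x.2 a y.2 g hg hiso h1
  · exfalso
    apply ha
    refine ⟨K, by omega, by omega, ?_⟩
    intro i hi
    have h2 := hKpre (Fin.castAdd x.1 i) (by simpa using hi)
    rw [pds_castAdd_s9] at h2
    simpa using h2


/-- If `α` is indecomposable and `α ⊕ σ ≰ τ`, then `π ↦ α ⊕ π` is an order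
isomorphism from `[σ,τ]` onto `[α⊕σ, α⊕τ]`: it maps into the target interval,
is surjective onto it, and preserves and reflects the order. -/
theorem augmentation_isomorphism (σ τ α : PermPt) (hστ : ple σ τ)
    (hα : ¬ Decomp α.2) (h : ¬ ple (pdsP α σ) τ) :
    (∀ π : PermPt, ple σ π → ple π τ →
      ple (pdsP α σ) (pdsP α π) ∧ ple (pdsP α π) (pdsP α τ)) ∧
    (∀ ρ : PermPt, ple (pdsP α σ) ρ → ple ρ (pdsP α τ) →
      ∃ π : PermPt, ple σ π ∧ ple π τ ∧ ρ = pdsP α π) ∧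
    (∀ π π' : PermPt, ple σ π → ple π τ → ple σ π' → ple π' τ →
      (ple π π' ↔ ple (pdsP α π) (pdsP α π'))) := by
  obtain ⟨m, a⟩ := α
  have hα' : ¬ Decomp a := hα
  rcases Nat.eq_zero_or_pos m with hm0 | hm
  · subst hm0
    exact absurd (ple_trans (ple_pds_zero a σ) hστ) h
  refine ⟨fun π h1 h2 => ⟨pds_mono _ h1, pds_mono _ h2⟩, ?_, ?_⟩
  · -- surjectivity
    intro ρ hσρ hρτ
    obtain ⟨N, p⟩ := ρ
    have hρτ' : ple ⟨N, p⟩ ⟨m + τ.1, pds a τ.2⟩ := hρτ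
    obtain ⟨g, hg, hiso⟩ := hρτ'
    obtain ⟨K, hK1, hK2, hKsplit, hKpre⟩ := emb_split p a τ.2 g hg hiso
    obtain ⟨l, rfl⟩ : ∃ l, N = K + l := ⟨N - K, by omega⟩
    obtain ⟨β, γ, rfl⟩ := decompose p hKpre
    have hσρ' : ple ⟨m + σ.1, pds a σ.2⟩ ⟨K + l, pds β γ⟩ := hσρ
    obtain ⟨g', hg', hiso'⟩ := hσρ'
    obtain ⟨t, ht1, ht2, htsplit, htpre⟩ := emb_split (pds a σ.2) β γ g' hg' hiso'
    have hγτ : ple ⟨l, γ⟩ ⟨τ.1, τ.2⟩ :=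
      emb_upper β γ a τ.2 g hg hiso (fun i hi => by have := hKsplit i; omega)
    by_cases ht0 : t = 0
    · exfalso
      subst ht0
      have h1 : ple (pdsP ⟨m, a⟩ σ) ⟨l, γ⟩ :=
        emb_whole_upper (pds a σ.2) β γ g' hg' hiso'
          (fun i => by have := htsplit i; omega)
      exact h (ple_trans h1 hγτ)
    by_cases htm : t = m
    · have hKm : m = K := by omega
      subst hKm
      -- identity on the first block
      have hlt : ∀ i : Fin m, (g' (Fin.castAdd σ.1 i) : ℕ) < m := by
        intro i
        have h0 : ((Fin.castAdd σ.1 i : Fin (m + σ.1)) : ℕ) < t := by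
          simp only [Fin.coe_castAdd]
          have := i.isLt
          omega
        exact (htsplit (Fin.castAdd σ.1 i)).mp h0
      have hsm : StrictMono
          (fun i : Fin m => (⟨(g' (Fin.castAdd σ.1 i) : ℕ), hlt i⟩ : Fin m)) := by
        intro u v huv
        rw [Fin.lt_def]
        show (g' (Fin.castAdd σ.1 u) : ℕ) < (g' (Fin.castAdd σ.1 v) : ℕ)
        have h2 : (Fin.castAdd σ.1 u : Fin (m + σ.1)) < Fin.castAdd σ.1 v := by
          rw [Fin.lt_def]
          simpa using huv
        exact hg' h2
      have hid : ∀ i : Fin m, (g' (Fin.castAdd σ.1 i) : ℕ) = (i : ℕ) := by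
        intro i
        have h2 := sm_fin_id hsm i
        have := congrArg Fin.val h2
        simpa using this
      have hβa : β = a := by
        apply perm_eq
        intro u v
        have h2 : pds a σ.2 (Fin.castAdd σ.1 u) ≤ pds a σ.2 (Fin.castAdd σ.1 v) ↔
            pds β γ (g' (Fin.castAdd σ.1 u)) ≤ pds β γ (g' (Fin.castAdd σ.1 v)) :=
          hiso' _ _
        have hgu : g' (Fin.castAdd σ.1 u) = Fin.castAdd l u := by
          ext
          rw [hid u]
          simp
        have hgv : g' (Fin.castAdd σ.1 v) = Fin.castAdd l v := by
          ext
          rw [hid v]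
          simp
        rw [pds_castAdd_s9, pds_castAdd_s9, hgu, hgv, pds_castAdd_s9, pds_castAdd_s9] at h2
        rw [Fin.le_def, Fin.le_def] at h2
        simp only [Fin.coe_castAdd] at h2
        rw [Fin.le_def, Fin.le_def]
        exact h2.symm
      subst hβa
      have hσγ : ple ⟨σ.1, σ.2⟩ ⟨l, γ⟩ :=
        emb_upper β σ.2 β γ g' hg' hiso' (fun i hi => by have := htsplit i; omega)
      exact ⟨⟨l, γ⟩, hσγ, hγτ, rfl⟩
    · exfalso
      apply hα'
      refine ⟨t, by omega, by omega, ?_⟩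
      intro i hi
      have h2 := htpre (Fin.castAdd σ.1 i) (by simpa using hi)
      rw [pds_castAdd_s9] at h2
      simpa using h2
  · -- order preservation / reflection
    intro π π' hσπ hπτ hσπ' hπ'τ
    constructor
    · exact fun h12 => pds_mono _ h12
    · intro h12
      rcases key_L a hm hα' π π' h12 with h2 | h2
      · exact h2
      · exact absurd (ple_trans (ple_trans (pds_mono _ hσπ) h2) hπ'τ) h
end
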